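/- arXiv:alg-geom/9606003 — 2 statements merged into one kernel-verified Lean document; each statement's English description precedes it below -/
import Mathlib

section
/- Let V = V₁ ⊕ V₂ be a direct sum of finite-dimensional real vector spaces with r₁ = dim V₁, r₂ = dim V₂ and r₂ > 0, equipped with a norm ‖·‖. Let f : V → ℂ satisfy |f(x)| ≤ c/(1 + ‖x‖)^{r₁ + r₂ + 2ε} for all x ∈ V and some constants c, ε > 0. Let W ⊂ V₂ be a closed subgroup such that V₂/W is compact, and fix a Haar measure dw on W. Then there exists a constant c′ > 0 such that ∫_W |f(x₁ + w)| dw ≤ c′/(1 + ‖x₁‖)^{r₁ + ε} for every x₁ ∈ V₁. -/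
open MeasureTheory

open Module Metric Topology
open scoped ENNReal

lemma lintegral_one_add_norm_subgroup_lt_top
    (V₂ : Type*) [NormedAddCommGroup V₂] [NormedSpace ℝ V₂] [FiniteDimensional ℝ V₂]
    [MeasurableSpace V₂] [BorelSpace V₂]
    (W : AddSubgroup V₂) (hW : IsClosed (W : Set V₂))
    (μ : Measure W) [μ.IsAddHaarMeasure] {q : ℝ} (hq : (finrank ℝ V₂ : ℝ) < q) :
    (∫⁻ w : W, ENNReal.ofReal ((1 + ‖(w : V₂)‖) ^ (-q)) ∂μ) < ∞ := by
  classical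
  haveI : BorelSpace W := Subtype.borelSpace (W : Set V₂)
  have hq0 : 0 < q := lt_of_le_of_lt (Nat.cast_nonneg _) hq
  haveI : SigmaCompactSpace W := by
    refine ⟨⟨fun n => Subtype.val ⁻¹' closedBall 0 n, fun n => ?_, ?_⟩⟩
    · exact hW.isClosedEmbedding_subtypeVal.isCompact_preimage (isCompact_closedBall 0 n)
    · ext w
      simp only [Set.mem_iUnion, Set.mem_preimage, mem_closedBall, dist_zero_right, Set.mem_univ,
        iff_true]
      exact exists_nat_ge ‖(w : V₂)‖
  set ν : Measure V₂ := (Module.finBasis ℝ V₂).addHaar with hν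
  set g : V₂ → ℝ≥0∞ := fun v => ENNReal.ofReal ((1 + ‖v‖) ^ (-q)) with hg
  have hmeasV : Measurable g := by
    apply Measurable.ennreal_ofReal
    fun_prop
  have hmeasW : Measurable fun w : W => g (w : V₂) := hmeasV.comp measurable_subtype_coe
  -- the thickening set
  set T : Set (W × V₂) := (fun p : W × V₂ => p.2 - (p.1 : V₂)) ⁻¹' closedBall 0 1 with hT
  have hTmeas : MeasurableSet T :=
    (measurable_snd.sub (measurable_subtype_coe.comp measurable_fst))
      measurableSet_closedBall
  set F : W → V₂ → ℝ≥0∞ := fun w v => g (w : V₂) * T.indicator 1 (w, v) with hF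
  have hFmeas : Measurable (Function.uncurry F) := by
    apply Measurable.mul
    · exact hmeasV.comp (measurable_subtype_coe.comp measurable_fst)
    · exact (measurable_one.indicator hTmeas)
  set M : ℝ≥0∞ := μ (Subtype.val ⁻¹' closedBall (0 : V₂) 2) with hM
  have hMlt : M < ∞ :=
    (hW.isClosedEmbedding_subtypeVal.isCompact_preimage
      (isCompact_closedBall 0 2)).measure_lt_top
  set B : ℝ≥0∞ := ν (closedBall (0 : V₂) 1) with hB
  have hB0 : 0 < B := by
    refine lt_of_lt_of_le ?_ (measure_mono ball_subset_closedBall)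
    exact isOpen_ball.measure_pos ν ⟨0, mem_ball_self one_pos⟩
  have hBlt : B < ∞ := (isCompact_closedBall _ _).measure_lt_top
  -- Step 1 : I * B = double integral
  have step1 : (∫⁻ w : W, g (w : V₂) ∂μ) * B = ∫⁻ w : W, ∫⁻ v : V₂, F w v ∂ν ∂μ := by
    rw [← lintegral_mul_const' B _ hBlt.ne]
    refine lintegral_congr fun w => ?_
    have : ∀ v : V₂, F w v = (closedBall ((w : V₂)) 1).indicator (fun _ => g (w : V₂)) v := by
      intro v
      simp only [hF, Set.indicator]
      by_cases h : v ∈ closedBall ((w : V₂)) 1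
      · have h' : (w, v) ∈ T := by
          simp only [hT, Set.mem_preimage, mem_closedBall, dist_zero_right]
          simpa [mem_closedBall, dist_eq_norm] using h
        simp [h, h']
      · have h' : (w, v) ∉ T := by
          simp only [hT, Set.mem_preimage, mem_closedBall, dist_zero_right]
          intro hc
          exact h (by simpa [mem_closedBall, dist_eq_norm] using hc)
        simp [h, h']
    rw [lintegral_congr this, lintegral_indicator measurableSet_closedBall]
    simp [Measure.addHaar_closedBall_center]
    rfl
  -- Step 2 : swap
  have step2 : (∫⁻ w : W, ∫⁻ v : V₂, F w v ∂ν ∂μ) = ∫⁻ v : V₂, ∫⁻ w : W, F w v ∂μ ∂ν :=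
    lintegral_lintegral_swap hFmeas.aemeasurable
  -- Step 3 : inner bound for fixed v
  have step3 : ∀ v : V₂, (∫⁻ w : W, F w v ∂μ) ≤ ENNReal.ofReal (2 ^ q) * g v * M := by
    intro v
    set S : Set W := {w : W | v - (w : V₂) ∈ closedBall (0 : V₂) 1} with hS
    have hSmeas : MeasurableSet S :=
      ((measurable_const.sub measurable_subtype_coe)) measurableSet_closedBall
    have hptwise : ∀ w : W, F w v ≤ (ENNReal.ofReal (2 ^ q) * g v) * S.indicator 1 w := by
      intro w
      by_cases h : w ∈ S
      · have hvw : ‖v - (w : V₂)‖ ≤ 1 := by simpa [hS, mem_closedBall, dist_eq_norm] using h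
        have hwv : ‖v‖ ≤ ‖(w : V₂)‖ + 1 := by
          calc ‖v‖ = ‖(v - (w : V₂)) + (w : V₂)‖ := by rw [sub_add_cancel]
          _ ≤ ‖v - (w : V₂)‖ + ‖(w : V₂)‖ := norm_add_le _ _
          _ ≤ ‖(w : V₂)‖ + 1 := by linarith
        have hreal : (1 + ‖(w : V₂)‖) ^ (-q) ≤ 2 ^ q * (1 + ‖v‖) ^ (-q) := by
          have h1 : (0:ℝ) < (1 + ‖(w : V₂)‖) ^ q := Real.rpow_pos_of_pos (by positivity) _
          have h2 : (0:ℝ) < (1 + ‖v‖) ^ q := Real.rpow_pos_of_pos (by positivity) _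
          have h3 : (1 + ‖v‖) ^ q ≤ 2 ^ q * (1 + ‖(w : V₂)‖) ^ q := by
            calc (1 + ‖v‖) ^ q ≤ (2 * (1 + ‖(w : V₂)‖)) ^ q :=
                  Real.rpow_le_rpow (by positivity)
                    (by have := norm_nonneg (w : V₂); linarith) hq0.le
            _ = 2 ^ q * (1 + ‖(w : V₂)‖) ^ q :=
                  Real.mul_rpow (by norm_num) (by positivity)
          rw [Real.rpow_neg (by positivity), Real.rpow_neg (by positivity)]
          rw [← div_eq_mul_inv, le_div_iff₀ h2, inv_mul_eq_div, div_le_iff₀ h1]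
          linarith
        have hind : T.indicator (1 : W × V₂ → ℝ≥0∞) (w, v) ≤ 1 := by
          simp [Set.indicator]; split <;> simp
        calc F w v ≤ g (w : V₂) * 1 := by
              exact mul_le_mul_right hind _
        _ = g (w : V₂) := mul_one _
        _ ≤ ENNReal.ofReal (2 ^ q * (1 + ‖v‖) ^ (-q)) := ENNReal.ofReal_le_ofReal hreal
        _ = ENNReal.ofReal (2 ^ q) * g v := ENNReal.ofReal_mul (by positivity)
        _ = (ENNReal.ofReal (2 ^ q) * g v) * S.indicator 1 w := by
              simp [Set.indicator, h]
      · have h' : (w, v) ∉ T := h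
        simp [hF, Set.indicator, h', h]
    calc (∫⁻ w : W, F w v ∂μ) ≤ ∫⁻ w : W, (ENNReal.ofReal (2 ^ q) * g v) * S.indicator 1 w ∂μ :=
          lintegral_mono hptwise
    _ = (ENNReal.ofReal (2 ^ q) * g v) * μ S := by
          rw [lintegral_const_mul' _ _ (by
            exact ENNReal.mul_ne_top ENNReal.ofReal_ne_top ENNReal.ofReal_ne_top)]
          rw [lintegral_indicator_one hSmeas]
    _ ≤ (ENNReal.ofReal (2 ^ q) * g v) * M := by
          refine mul_le_mul_right ?_ _
          rcases Set.eq_empty_or_nonempty S with hSe | ⟨w₀, hw₀⟩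
          · simp [hSe]
          · have hsub : S ⊆ (fun w : W => w + -w₀) ⁻¹' (Subtype.val ⁻¹' closedBall (0 : V₂) 2) := by
              intro w hw
              simp only [Set.mem_preimage, mem_closedBall, dist_zero_right] at *
              have h1 : ‖v - (w : V₂)‖ ≤ 1 := by
                simpa [hS, mem_closedBall, dist_eq_norm] using hw
              have h2 : ‖v - (w₀ : V₂)‖ ≤ 1 := by
                simpa [hS, mem_closedBall, dist_eq_norm] using hw₀
              have : ((w + -w₀ : W) : V₂) = (v - (w₀ : V₂)) - (v - (w : V₂)) := by
                push_cast; abel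
              rw [this]
              calc ‖(v - (w₀ : V₂)) - (v - (w : V₂))‖ ≤ ‖v - (w₀ : V₂)‖ + ‖v - (w : V₂)‖ :=
                    norm_sub_le _ _
              _ ≤ 2 := by linarith
            calc μ S ≤ μ ((fun w : W => w + -w₀) ⁻¹'
                  (Subtype.val ⁻¹' closedBall (0 : V₂) 2)) := measure_mono hsub
            _ = M := measure_preimage_add_right μ (-w₀) _
  -- Step 4: finish
  have hJ : (∫⁻ v : V₂, g v ∂ν) < ∞ := finite_integral_one_add_norm hq
  have key : (∫⁻ w : W, g (w : V₂) ∂μ) * B ≤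
      ENNReal.ofReal (2 ^ q) * M * ∫⁻ v : V₂, g v ∂ν := by
    rw [step1, step2]
    calc (∫⁻ v : V₂, ∫⁻ w : W, F w v ∂μ ∂ν)
        ≤ ∫⁻ v : V₂, ENNReal.ofReal (2 ^ q) * g v * M ∂ν := lintegral_mono step3
    _ = ENNReal.ofReal (2 ^ q) * M * ∫⁻ v : V₂, g v ∂ν := by
        rw [← lintegral_const_mul' _ _ (ENNReal.mul_ne_top ENNReal.ofReal_ne_top hMlt.ne)]
        refine lintegral_congr fun v => ?_
        ring
  have hrhs : ENNReal.ofReal (2 ^ q) * M * (∫⁻ v : V₂, g v ∂ν) < ∞ :=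
    ENNReal.mul_lt_top (ENNReal.mul_lt_top ENNReal.ofReal_lt_top hMlt) hJ
  have hfin : (∫⁻ w : W, g (w : V₂) ∂μ) < ∞ := by
    by_contra hcon
    push_neg at hcon
    rw [top_le_iff.mp hcon, ENNReal.top_mul hB0.ne'] at key
    exact lt_irrefl _ (lt_of_le_of_lt key hrhs)
  exact hfin

/-- (Lemma 2.15)  Let `V = V₁ ⊕ V₂` be a direct sum of finite-dimensional real vector
spaces with `dim V₂ > 0`, and `f : V → ℂ` a function with
`|f(x)| ≤ c/(1+‖x‖)^{r₁+r₂+2ε}` for all `x` and some `c, ε > 0`.  Let `W ⊆ V₂` be a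
closed cocompact subgroup with Haar measure `μ`.  Then there is `c′ > 0` such that
`∫_W |f(x₁+w)| dμ(w) ≤ c′/(1+‖x₁‖)^{r₁+ε}` for every `x₁ ∈ V₁`. -/
theorem integral_decay_along_cocompact_subgroup
    (V₁ V₂ : Type*)
    [NormedAddCommGroup V₁] [NormedSpace ℝ V₁] [FiniteDimensional ℝ V₁]
    [NormedAddCommGroup V₂] [NormedSpace ℝ V₂] [FiniteDimensional ℝ V₂]
    [MeasurableSpace V₂] [BorelSpace V₂]
    (hr₂ : 0 < Module.finrank ℝ V₂)
    (f : V₁ × V₂ → ℂ) (c ε : ℝ) (hc : 0 < c) (hε : 0 < ε)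
    (hf : ∀ x : V₁ × V₂,
      ‖f x‖ ≤ c / (1 + ‖x‖) ^
        ((Module.finrank ℝ V₁ : ℝ) + (Module.finrank ℝ V₂ : ℝ) + 2 * ε))
    (W : AddSubgroup V₂) (hW : IsClosed (W : Set V₂))
    [CompactSpace (V₂ ⧸ W)]
    (μ : Measure W) [μ.IsAddHaarMeasure] :
    ∃ c' : ℝ, 0 < c' ∧ ∀ x₁ : V₁,
      (∫⁻ w : W, ENNReal.ofReal ‖f (x₁, (w : V₂))‖ ∂μ)
        ≤ ENNReal.ofReal (c' / (1 + ‖x₁‖) ^ ((Module.finrank ℝ V₁ : ℝ) + ε)) := by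
  set p : ℝ := (finrank ℝ V₁ : ℝ) + ε with hp
  set q : ℝ := (finrank ℝ V₂ : ℝ) + ε with hqdef
  have hp0 : 0 < p := by positivity
  have hq0 : 0 < q := by positivity
  have hq : (finrank ℝ V₂ : ℝ) < q := lt_add_of_pos_right _ hε
  -- pointwise bound
  have hbound : ∀ (x₁ : V₁) (v : V₂),
      ‖f (x₁, v)‖ ≤ c / (1 + ‖x₁‖) ^ p * (1 + ‖v‖) ^ (-q) := by
    intro x₁ v
    have h := hf (x₁, v)
    have hexp : (finrank ℝ V₁ : ℝ) + (finrank ℝ V₂ : ℝ) + 2 * ε = p + q := by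
      rw [hp, hqdef]; ring
    rw [hexp] at h
    have hx : ‖x₁‖ ≤ ‖(x₁, v)‖ := norm_fst_le (x₁, v)
    have hv : ‖v‖ ≤ ‖(x₁, v)‖ := norm_snd_le (x₁, v)
    have hden : (1 + ‖x₁‖) ^ p * (1 + ‖v‖) ^ q ≤ (1 + ‖(x₁, v)‖) ^ (p + q) := by
      have hsplit : (1 + ‖(x₁, v)‖) ^ (p + q)
          = (1 + ‖(x₁, v)‖) ^ p * (1 + ‖(x₁, v)‖) ^ q := Real.rpow_add (by positivity) _ _
      rw [hsplit]
      have h1 : (1 + ‖x₁‖) ^ p ≤ (1 + ‖(x₁, v)‖) ^ p :=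
        Real.rpow_le_rpow (by positivity) (by linarith) hp0.le
      have h2 : (1 + ‖v‖) ^ q ≤ (1 + ‖(x₁, v)‖) ^ q :=
        Real.rpow_le_rpow (by positivity) (by linarith) hq0.le
      exact mul_le_mul h1 h2 (by positivity) (by positivity)
    have hApos : (0:ℝ) < (1 + ‖x₁‖) ^ p := Real.rpow_pos_of_pos (by positivity) _
    have hBpos : (0:ℝ) < (1 + ‖v‖) ^ q := Real.rpow_pos_of_pos (by positivity) _
    calc ‖f (x₁, v)‖ ≤ c / (1 + ‖(x₁, v)‖) ^ (p + q) := h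
    _ ≤ c / ((1 + ‖x₁‖) ^ p * (1 + ‖v‖) ^ q) := by
        apply div_le_div_of_nonneg_left hc.le (by positivity) hden
    _ = c / (1 + ‖x₁‖) ^ p * (1 + ‖v‖) ^ (-q) := by
        rw [Real.rpow_neg (by positivity), ← div_div, div_eq_mul_inv (c / _)]
  -- finiteness of the subgroup integral
  have hI : (∫⁻ w : W, ENNReal.ofReal ((1 + ‖(w : V₂)‖) ^ (-q)) ∂μ) < ∞ :=
    lintegral_one_add_norm_subgroup_lt_top V₂ W hW μ hq
  set Iv : ℝ≥0∞ := ∫⁻ w : W, ENNReal.ofReal ((1 + ‖(w : V₂)‖) ^ (-q)) ∂μ with hIv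
  refine ⟨c * (Iv.toReal + 1), by positivity, fun x₁ => ?_⟩
  have hA : (0:ℝ) ≤ c / (1 + ‖x₁‖) ^ p := by positivity
  have hmeas : Measurable fun w : W => ENNReal.ofReal ((1 + ‖(w : V₂)‖) ^ (-q)) := by
    apply Measurable.ennreal_ofReal
    have : Measurable fun w : W => ((w : V₂)) := measurable_subtype_coe
    fun_prop
  calc (∫⁻ w : W, ENNReal.ofReal ‖f (x₁, (w : V₂))‖ ∂μ)
      ≤ ∫⁻ w : W, ENNReal.ofReal (c / (1 + ‖x₁‖) ^ p) *
          ENNReal.ofReal ((1 + ‖(w : V₂)‖) ^ (-q)) ∂μ := by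
        refine lintegral_mono fun w => ?_
        rw [← ENNReal.ofReal_mul hA]
        exact ENNReal.ofReal_le_ofReal (hbound x₁ (w : V₂))
  _ = ENNReal.ofReal (c / (1 + ‖x₁‖) ^ p) * Iv :=
        lintegral_const_mul' _ _ ENNReal.ofReal_ne_top
  _ ≤ ENNReal.ofReal (c / (1 + ‖x₁‖) ^ p) * ENNReal.ofReal (Iv.toReal + 1) := by
        refine mul_le_mul_right ?_ _
        calc Iv = ENNReal.ofReal Iv.toReal := (ENNReal.ofReal_toReal hI.ne).symm
        _ ≤ ENNReal.ofReal (Iv.toReal + 1) := ENNReal.ofReal_le_ofReal (by linarith)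
  _ = ENNReal.ofReal (c * (Iv.toReal + 1) / (1 + ‖x₁‖) ^ p) := by
        rw [← ENNReal.ofReal_mul hA]
        congr 1
        ring
end

section
/- Let A be a free abelian group of rank k, A_ℝ = A ⊗ ℝ, and Λ ⊂ A_ℝ a convex k-dimensional finitely generated rational polyhedral cone with Λ ∩ (−Λ) = {0}. Then for every s ∈ ℂ ⊗ A_ℝ with Re(s) in the interior Λ° of Λ, the function y ↦ e^{−⟨s,y⟩} is absolutely integrable on the dual cone Λ* ⊂ A*_ℝ, and the X-function X_Λ(s) = ∫_{Λ*} e^{−⟨s,y⟩} dy is a holomorphic function of s on the tube domain Λ° + iA_ℝ. -/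
open MeasureTheory

/-- The dual cone of a set `Λ ⊆ ℝ^k` (with respect to the standard pairing). -/
def dualCone {k : ℕ} (Λ : Set (Fin k → ℝ)) : Set (Fin k → ℝ) :=
  {y | ∀ x ∈ Λ, 0 ≤ ∑ i, x i * y i}

/-- `Λ ⊆ ℝ^k` is a finitely generated rational polyhedral cone. -/
def IsRationalPolyCone {k : ℕ} (Λ : Set (Fin k → ℝ)) : Prop :=
  ∃ (m : ℕ) (v : Fin m → Fin k → ℤ),
    Λ = {x | ∃ c : Fin m → ℝ, (∀ i, 0 ≤ c i) ∧ x = ∑ i, c i • fun j => (v i j : ℝ)}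

/-- `Λ ⊆ ℝ^k` is a convex `k`-dimensional finitely generated rational polyhedral cone
containing no line (`Λ ∩ (−Λ) = {0}`). -/
def IsGoodCone {k : ℕ} (Λ : Set (Fin k → ℝ)) : Prop :=
  IsRationalPolyCone Λ ∧ Submodule.span ℝ Λ = ⊤ ∧ Λ ∩ (-Λ) = {0}

/-- The `X`-function of a cone `Λ ⊆ ℝ^k` (lattice `ℤ^k`, so the normalized Haar
measure on the dual space is the Lebesgue measure):
`X_Λ(s) = ∫_{Λ*} e^{−⟨s,y⟩} dy`. -/
noncomputable def Xfun {k : ℕ} (Λ : Set (Fin k → ℝ)) (s : Fin k → ℂ) : ℂ :=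
  ∫ y in dualCone Λ, Complex.exp (-∑ i, s i * (y i : ℂ))

section Aux

open Set

private lemma Xaux_int1d {a : ℝ} (ha : 0 < a) :
    Integrable (fun t : ℝ => Real.exp (-(a * |t|))) := by
  have h1 : IntegrableOn (fun t : ℝ => Real.exp (-(a * |t|))) (Ioi 0) := by
    apply (exp_neg_integrableOn_Ioi 0 ha).congr_fun (fun t ht => ?_) measurableSet_Ioi
    rw [abs_of_pos ht, neg_mul]
  have h2 : IntegrableOn (fun t : ℝ => Real.exp (-(a * |t|))) (Iic 0) := by
    rw [← Measure.map_neg_eq_self (volume : Measure ℝ)]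
    have m : MeasurableEmbedding fun x : ℝ => -x := (Homeomorph.neg ℝ).measurableEmbedding
    rw [m.integrableOn_map_iff]
    simp_rw [Function.comp_def, abs_neg, neg_preimage, neg_Iic, neg_zero]
    exact (integrableOn_Ici_iff_integrableOn_Ioi).mpr h1
  have := h2.union h1
  rwa [Iic_union_Ioi, integrableOn_univ] at this

private lemma Xaux_intprod {k : ℕ} {a : ℝ} (ha : 0 < a) :
    Integrable (fun y : Fin k → ℝ => Real.exp (-(a * ∑ i, |y i|))) := by
  have : (fun y : Fin k → ℝ => Real.exp (-(a * ∑ i, |y i|)))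
      = fun y : Fin k → ℝ => ∏ i, Real.exp (-(a * |y i|)) := by
    funext y
    rw [← Real.exp_sum]
    congr 1
    rw [Finset.mul_sum]
    simp
  rw [this]
  exact Integrable.fintype_prod (fun _ => Xaux_int1d ha)

private lemma Xaux_coercive {k : ℕ} {Λ : Set (Fin k → ℝ)} {x₀ : Fin k → ℝ}
    (hx : x₀ ∈ interior Λ) :
    ∃ a > 0, ∀ y ∈ dualCone Λ, a * ∑ i, |y i| ≤ ∑ i, x₀ i * y i := by
  obtain ⟨ε, hε, hball⟩ := Metric.isOpen_iff.1 isOpen_interior x₀ hx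
  refine ⟨ε / 2 / (k + 1), by positivity, fun y hy => ?_⟩
  have key : ∀ (i : Fin k) (c : ℝ), |c| < ε → c * y i ≤ ∑ j, x₀ j * y j := by
    intro i c hc
    have hmem : x₀ - c • (Pi.single i 1 : Fin k → ℝ) ∈ Λ := by
      apply interior_subset
      apply hball
      rw [Metric.mem_ball, dist_eq_norm]
      rw [show x₀ - c • (Pi.single i 1 : Fin k → ℝ) - x₀
          = -(c • (Pi.single i 1 : Fin k → ℝ)) by abel]
      rw [norm_neg, norm_smul, Pi.norm_single, norm_one, mul_one, Real.norm_eq_abs]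
      exact hc
    have h0 := hy _ hmem
    have : ∑ j, (x₀ - c • (Pi.single i 1 : Fin k → ℝ)) j * y j
        = (∑ j, x₀ j * y j) - c * y i := by
      simp only [Pi.sub_apply, Pi.smul_apply, Pi.single_apply, smul_eq_mul, sub_mul,
        Finset.sum_sub_distrib]
      congr 1
      simp [mul_ite, Finset.sum_ite_eq', mul_assoc]
    rw [this] at h0
    linarith
  have habs : ∀ i : Fin k, (ε / 2) * |y i| ≤ ∑ j, x₀ j * y j := by
    intro i
    rcases abs_cases (y i) with ⟨h, _⟩ | ⟨h, _⟩
    · rw [h] at *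
      exact key i (ε / 2) (by rw [abs_of_pos (by linarith)]; linarith)
    · rw [h]
      have := key i (-(ε / 2)) (by rw [abs_neg, abs_of_pos (by linarith)]; linarith)
      linarith [this]
  have hS : 0 ≤ ∑ j, x₀ j * y j := hy _ (interior_subset hx)
  have hsum : (ε / 2) * ∑ i, |y i| ≤ (k : ℝ) * ∑ j, x₀ j * y j := by
    rw [Finset.mul_sum]
    calc ∑ i, (ε/2) * |y i| ≤ ∑ _i : Fin k, ∑ j, x₀ j * y j :=
          Finset.sum_le_sum fun i _ => habs i
      _ = (k : ℝ) * ∑ j, x₀ j * y j := by simp [Finset.sum_const, nsmul_eq_mul]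
  rw [div_mul_eq_mul_div, div_le_iff₀ (by positivity)]
  calc ε / 2 * ∑ i, |y i| ≤ (k : ℝ) * ∑ j, x₀ j * y j := hsum
    _ ≤ (∑ j, x₀ j * y j) * (k + 1) := by nlinarith

private lemma Xaux_norm_cexp {k : ℕ} (s : Fin k → ℂ) (y : Fin k → ℝ) :
    ‖Complex.exp (-∑ i, s i * (y i : ℂ))‖ = Real.exp (-∑ i, (s i).re * y i) := by
  rw [Complex.norm_exp]
  congr 1
  simp [Complex.re_sum]

private lemma Xaux_isClosed {k : ℕ} (Λ : Set (Fin k → ℝ)) : IsClosed (dualCone Λ) := by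
  have : dualCone Λ = ⋂ x ∈ Λ, {y : Fin k → ℝ | 0 ≤ ∑ i, x i * y i} := by
    ext y; simp [dualCone]
  rw [this]
  exact isClosed_biInter fun x _ => isClosed_le continuous_const (by fun_prop)

private lemma Xaux_cont {k : ℕ} (s : Fin k → ℂ) :
    Continuous (fun y : Fin k → ℝ => Complex.exp (-∑ i, s i * (y i : ℂ))) := by
  fun_prop

private lemma Xaux_part1 {k : ℕ} {Λ : Set (Fin k → ℝ)} (s : Fin k → ℂ)
    (hs : (fun i => (s i).re) ∈ interior Λ) :
    IntegrableOn (fun y : Fin k → ℝ => Complex.exp (-∑ i, s i * (y i : ℂ)))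
      (dualCone Λ) := by
  obtain ⟨a, ha, hb⟩ := Xaux_coercive hs
  refine Integrable.mono ((Xaux_intprod ha).restrict (s := dualCone Λ))
    ((Xaux_cont s).aestronglyMeasurable.restrict) ?_
  rw [ae_restrict_iff' (Xaux_isClosed Λ).measurableSet]
  filter_upwards with y hy
  rw [Xaux_norm_cexp, Real.norm_eq_abs, abs_of_pos (Real.exp_pos _)]
  exact Real.exp_le_exp.mpr (by simpa using hb y hy)

end Aux

/-- For a convex full-dimensional finitely generated rational polyhedral cone `Λ ⊆ ℝ^k`
with `Λ ∩ (−Λ) = {0}`: for every `s` with `Re(s) ∈ Λ°` the function `y ↦ e^{−⟨s,y⟩}` is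
absolutely integrable on the dual cone `Λ*`, and `X_Λ` is holomorphic on the tube domain
`Λ° + iℝ^k`. -/
theorem Xfun_integrable_holomorphic (k : ℕ) (Λ : Set (Fin k → ℝ)) (hΛ : IsGoodCone Λ) :
    (∀ s : Fin k → ℂ, (fun i => (s i).re) ∈ interior Λ →
      IntegrableOn (fun y : Fin k → ℝ => Complex.exp (-∑ i, s i * (y i : ℂ)))
        (dualCone Λ)) ∧
    DifferentiableOn ℂ (Xfun Λ) {s : Fin k → ℂ | (fun i => (s i).re) ∈ interior Λ} := by
  refine ⟨fun s hs => Xaux_part1 s hs, ?_⟩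
  intro s₀ hs₀
  simp only [Set.mem_setOf_eq] at hs₀
  obtain ⟨a, ha, hb⟩ := Xaux_coercive hs₀
  set μ : Measure (Fin k → ℝ) := volume.restrict (dualCone Λ) with hμ
  -- the linear form `s ↦ -⟨s, y⟩` as a continuous linear map
  set L : (Fin k → ℝ) → ((Fin k → ℂ) →L[ℂ] ℂ) :=
    fun y => ∑ i, (-(y i : ℂ)) • ContinuousLinearMap.proj i with hLdef
  have hL : ∀ (y : Fin k → ℝ) (s : Fin k → ℂ), L y s = -∑ i, s i * (y i : ℂ) := by
    intro y s
    simp only [hLdef, ContinuousLinearMap.coe_sum', Finset.sum_apply,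
      ContinuousLinearMap.smul_apply, ContinuousLinearMap.proj_apply, smul_eq_mul,
      ← Finset.sum_neg_distrib]
    exact Finset.sum_congr rfl fun i _ => by ring
  have hLnorm : ∀ y : Fin k → ℝ, ‖L y‖ ≤ ∑ i, |y i| := by
    intro y
    refine ContinuousLinearMap.opNorm_le_bound _ (by positivity) fun h => ?_
    rw [hL]
    calc ‖-∑ i, h i * (y i : ℂ)‖ = ‖∑ i, h i * (y i : ℂ)‖ := norm_neg _
      _ ≤ ∑ i, ‖h i * (y i : ℂ)‖ := norm_sum_le _ _
      _ ≤ ∑ i, |y i| * ‖h‖ := by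
          refine Finset.sum_le_sum fun i _ => ?_
          rw [norm_mul, Complex.norm_real, Real.norm_eq_abs, mul_comm]
          exact mul_le_mul_of_nonneg_left (norm_le_pi_norm h i) (abs_nonneg _)
      _ = (∑ i, |y i|) * ‖h‖ := (Finset.sum_mul _ _ _).symm
  have hderiv : ∀ (y : Fin k → ℝ) (s : Fin k → ℂ),
      HasFDerivAt (fun s : Fin k → ℂ => Complex.exp (-∑ i, s i * (y i : ℂ)))
        (Complex.exp (-∑ i, s i * (y i : ℂ)) • L y) s := by
    intro y s
    have heq : (fun s : Fin k → ℂ => -∑ i, s i * (y i : ℂ)) = L y :=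
      funext fun s => (hL y s).symm
    have h1 : HasFDerivAt (fun s : Fin k → ℂ => -∑ i, s i * (y i : ℂ)) (L y) s := by
      rw [heq]; exact (L y).hasFDerivAt
    simpa using h1.cexp
  -- the dominating bound
  set bound : (Fin k → ℝ) → ℝ :=
    fun y => (4 / a) * Real.exp (-(a / 4 * ∑ i, |y i|)) with hbdef
  -- norm estimate for the derivative on the ball of radius a/2
  have hkey : ∀ y ∈ dualCone Λ, ∀ s ∈ Metric.ball s₀ (a / 2),
      ‖Complex.exp (-∑ i, s i * (y i : ℂ)) • L y‖ ≤ bound y := by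
    intro y hy s hsball
    have hre : ∀ i, |(s i).re - (s₀ i).re| ≤ a / 2 := by
      intro i
      have h1 : |(s i - s₀ i).re| ≤ ‖s i - s₀ i‖ := Complex.abs_re_le_norm _
      have h2 : ‖s i - s₀ i‖ ≤ ‖s - s₀‖ := by
        simpa using norm_le_pi_norm (s - s₀) i
      have h3 : ‖s - s₀‖ < a / 2 := by
        rw [← dist_eq_norm]; exact hsball
      simp only [Complex.sub_re] at h1
      linarith
    set T : ℝ := ∑ i, |y i| with hT
    have hT0 : 0 ≤ T := Finset.sum_nonneg fun i _ => abs_nonneg _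
    have hdot : (a / 2) * T ≤ ∑ i, (s i).re * y i := by
      have hdiff : |∑ i, ((s i).re - (s₀ i).re) * y i| ≤ (a / 2) * T := by
        calc |∑ i, ((s i).re - (s₀ i).re) * y i| ≤ ∑ i, |((s i).re - (s₀ i).re) * y i| :=
              Finset.abs_sum_le_sum_abs _ _
          _ ≤ ∑ i, (a / 2) * |y i| := by
              refine Finset.sum_le_sum fun i _ => ?_
              rw [abs_mul]
              exact mul_le_mul_of_nonneg_right (hre i) (abs_nonneg _)
          _ = (a / 2) * T := by rw [hT, Finset.mul_sum]
      have hsplit : ∑ i, (s i).re * y i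
          = (∑ i, (s₀ i).re * y i) + ∑ i, ((s i).re - (s₀ i).re) * y i := by
        rw [← Finset.sum_add_distrib]
        exact Finset.sum_congr rfl fun i _ => by ring
      have hb' := hb y hy
      rw [hsplit]
      have := abs_le.1 hdiff
      linarith [hb' ]
    rw [norm_smul (Complex.exp (-∑ i, s i * (y i : ℂ))) (L y), Xaux_norm_cexp]
    calc Real.exp (-∑ i, (s i).re * y i) * ‖L y‖
        ≤ Real.exp (-(a / 2 * T)) * T := by
          apply mul_le_mul (Real.exp_le_exp.mpr (by linarith)) (hLnorm y)
            (norm_nonneg _) (Real.exp_pos _).le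
      _ ≤ Real.exp (-(a / 2 * T)) * ((4 / a) * Real.exp (a / 4 * T)) := by
          apply mul_le_mul_of_nonneg_left _ (Real.exp_pos _).le
          have h := Real.add_one_le_exp (a / 4 * T)
          have h2 : (4 / a) * (a / 4 * T + 1) ≤ (4 / a) * Real.exp (a / 4 * T) :=
            mul_le_mul_of_nonneg_left h (by positivity)
          have h3 : (4 / a) * (a / 4 * T + 1) = T + 4 / a := by
            field_simp
          have h4 : (0:ℝ) < 4 / a := by positivity
          linarith
      _ = bound y := by
          rw [hbdef]
          rw [← mul_assoc, mul_comm (Real.exp _) (4 / a), mul_assoc, ← Real.exp_add]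
          rw [hT]
          ring_nf
  have hmeas := (Xaux_isClosed Λ).measurableSet
  have hF'cont : Continuous (fun y : Fin k → ℝ =>
      Complex.exp (-∑ i, s₀ i * (y i : ℂ)) • L y) := by
    apply Continuous.smul (Xaux_cont s₀)
    rw [hLdef]
    exact continuous_finset_sum _ fun i _ =>
      ((Complex.continuous_ofReal.comp (continuous_apply i)).neg).smul continuous_const
  have hlip : ∀ᵐ y ∂μ, ∀ x ∈ Metric.ball s₀ (a / 2),
      ‖Complex.exp (-∑ i, x i * (y i : ℂ)) - Complex.exp (-∑ i, s₀ i * (y i : ℂ))‖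
        ≤ bound y * ‖x - s₀‖ := by
    rw [hμ, ae_restrict_iff' hmeas]
    filter_upwards with y hy
    intro x hx
    exact (convex_ball s₀ (a / 2)).norm_image_sub_le_of_norm_hasFDerivWithin_le
      (fun z _ => (hderiv y z).hasFDerivWithinAt)
      (fun z hz => hkey y hy z hz)
      (Metric.mem_ball_self (by positivity)) hx
  have main := hasFDerivAt_integral_of_dominated_loc_of_lip' (𝕜 := ℂ) (μ := μ)
    (F := fun (s : Fin k → ℂ) (y : Fin k → ℝ) => Complex.exp (-∑ i, s i * (y i : ℂ)))
    (F' := fun y => Complex.exp (-∑ i, s₀ i * (y i : ℂ)) • L y)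
    (x₀ := s₀) (bound := bound) (s := Metric.ball s₀ (a / 2)) (Metric.ball_mem_nhds s₀ (by positivity))
    (fun x _ => (Xaux_cont x).aestronglyMeasurable.restrict)
    (Xaux_part1 s₀ hs₀)
    hF'cont.aestronglyMeasurable.restrict
    hlip
    (((Xaux_intprod (show (0:ℝ) < a / 4 by positivity)).const_mul (4 / a)).restrict)
    (Filter.Eventually.of_forall fun y => hderiv y s₀)
  exact main.2.differentiableAt.differentiableWithinAt
end
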